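/- arXiv:2003.03308 — 2 statements merged into one kernel-verified Lean document; each statement's English description precedes it below -/
import Mathlib

section
/- Let Z be a nonempty finite type, n ≥ 1, let p be a PMF on Fin n → Z (the joint law of Z₁,…,Zₙ) with single-coordinate marginals p₁,…,pₙ, let Q₀ be a PMF on Z with Q₀(z) > 0 for all z, and let δ ≥ 0. If D(p ‖ Q₀^{⊗n}) ≤ δ, where Q₀^{⊗n}(z₁,…,zₙ) = ∏_{i=1}^n Q₀(zᵢ), then H(p̄) − (1/n)·∑_{i=1}^n H(pᵢ) ≤ δ/n, where p̄ = (1/n)·∑_{i=1}^n pᵢ. (This quantity equals the mutual information I(T; Z_T) when T is uniform on {1,…,n} and independent of (Z₁,…,Zₙ).) [Lemma 2 of the paper, third claim.] -/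
open scoped BigOperators

/-- A probability mass function on a finite type: nonnegative and sums to 1. -/
def IsPMF {A : Type*} [Fintype A] (p : A → ℝ) : Prop :=
  (∀ a, 0 ≤ p a) ∧ ∑ a, p a = 1

/-- Shannon entropy (natural log, with `0 * log 0 = 0` by Lean's conventions). -/
noncomputable def entF {A : Type*} [Fintype A] (p : A → ℝ) : ℝ :=
  -∑ a, p a * Real.log (p a)

/-- Kullback–Leibler divergence (natural log, `0 * log (0/q) = 0` by Lean's conventions). -/
noncomputable def klDivF {A : Type*} [Fintype A] (P Q : A → ℝ) : ℝ :=
  ∑ a, P a * Real.log (P a / Q a)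

/-- Pushforward (law of `f` under `p`), i.e. the marginal / induced distribution. -/
noncomputable def pushF {A B : Type*} [Fintype A] [DecidableEq B] (p : A → ℝ) (f : A → B) :
    B → ℝ :=
  fun b => ∑ a, if f a = b then p a else 0

/-- Mutual information `I(X;Y) = H(X) + H(Y) - H(X,Y)` of a joint PMF on a product type. -/
noncomputable def mutInfoF {A B : Type*} [Fintype A] [Fintype B] [DecidableEq A] [DecidableEq B]
    (p : A × B → ℝ) : ℝ :=
  entF (pushF p Prod.fst) + entF (pushF p Prod.snd) - entF p

/-- Conditional mutual information `I(X;Y|W) = H(X,W) + H(Y,W) - H(X,Y,W) - H(W)` of a joint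
PMF on `X × Y × W`. -/
noncomputable def condMIF {X Y W : Type*} [Fintype X] [Fintype Y] [Fintype W]
    [DecidableEq X] [DecidableEq Y] [DecidableEq W] (p : X × Y × W → ℝ) : ℝ :=
  entF (pushF p (fun t => (t.1, t.2.2))) + entF (pushF p (fun t => (t.2.1, t.2.2)))
    - entF p - entF (pushF p (fun t => t.2.2))

/-- Binary entropy function (natural log). -/
noncomputable def binEnt (t : ℝ) : ℝ :=
  -(t * Real.log t) - (1 - t) * Real.log (1 - t)

/-- The Bernoulli(t) PMF on `ZMod 2`, assigning probability `t` to `1`. -/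
noncomputable def bern (t : ℝ) : ZMod 2 → ℝ := fun x => if x = 1 then t else 1 - t

lemma pushF_mul_sum {A B : Type*} [Fintype A] [Fintype B] [DecidableEq B]
    (p : A → ℝ) (f : A → B) (g : B → ℝ) :
    ∑ b, pushF p f b * g b = ∑ a, p a * g (f a) := by
  have h1 : ∀ b, pushF p f b * g b = ∑ a, if f a = b then p a * g (f a) else 0 := by
    intro b; rw [pushF, Finset.sum_mul]
    refine Finset.sum_congr rfl fun a _ => ?_
    split <;> simp_all
  simp_rw [h1]
  rw [Finset.sum_comm]
  simp

lemma gibbs {A : Type*} [Fintype A] (P Q : A → ℝ)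
    (hP : ∀ a, 0 ≤ P a) (hPs : ∑ a, P a = 1)
    (hQ : ∀ a, 0 ≤ Q a) (hQs : ∑ a, Q a ≤ 1)
    (hac : ∀ a, Q a = 0 → P a = 0) : 0 ≤ klDivF P Q := by
  have key : ∀ a ∈ Finset.univ, P a - Q a ≤ P a * Real.log (P a / Q a) := by
    intro a _
    rcases eq_or_lt_of_le (hP a) with h0 | h0
    · rw [← h0]; simp; linarith [hQ a]
    · have hQ0 : 0 < Q a := by
        rcases eq_or_lt_of_le (hQ a) with h | h
        · exfalso; have := hac a h.symm; linarith
        · exact h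
      have hlog := Real.log_le_sub_one_of_pos (show 0 < Q a / P a by positivity)
      have hneg : Real.log (P a / Q a) = - Real.log (Q a / P a) := by
        rw [← Real.log_inv]; congr 1; field_simp
      rw [hneg]
      have h2 : -(Q a / P a - 1) ≤ -Real.log (Q a / P a) := by linarith
      have h3 := mul_le_mul_of_nonneg_left h2 h0.le
      have heq : P a * -(Q a / P a - 1) = P a - Q a := by field_simp; ring
      linarith
  have := Finset.sum_le_sum key
  rw [Finset.sum_sub_distrib] at this
  rw [klDivF]; linarith [this]

lemma klDivF_eq {A : Type*} [Fintype A] (P Q : A → ℝ) (hac : ∀ a, P a ≠ 0 → Q a ≠ 0) :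
    klDivF P Q = ∑ a, P a * Real.log (P a) - ∑ a, P a * Real.log (Q a) := by
  rw [klDivF, ← Finset.sum_sub_distrib]
  refine Finset.sum_congr rfl fun a _ => ?_
  by_cases h : P a = 0
  · simp [h]
  · rw [Real.log_div h (hac a h)]; ring


/-- Lemma 2, third claim: if `D(p ‖ Q₀^{⊗n}) ≤ δ` then the mutual information
`I(T; Z_T) = H(p̄) − (1/n)∑ᵢ H(pᵢ)` (with `T` uniform and independent) is at most `δ/n`,
where `pᵢ` are the single-coordinate marginals and `p̄` their average. -/
theorem avg_entropy_gap_le {Z : Type*} [Fintype Z] [Nonempty Z] [DecidableEq Z]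
    (n : ℕ) (hn : 1 ≤ n)
    (p : (Fin n → Z) → ℝ) (hp : IsPMF p)
    (Q₀ : Z → ℝ) (hQ₀ : IsPMF Q₀) (hQ₀pos : ∀ z, 0 < Q₀ z)
    (δ : ℝ) (hδ : 0 ≤ δ)
    (h : klDivF p (fun f => ∏ i, Q₀ (f i)) ≤ δ) :
    entF (fun z => (∑ i : Fin n, pushF p (fun f => f i) z) / n)
        - (1 / n) * ∑ i : Fin n, entF (pushF p (fun f => f i)) ≤ δ / n := by
  have hnR : (0:ℝ) < n := by exact_mod_cast hn
  set q : Fin n → Z → ℝ := fun i => pushF p (fun f => f i) with hq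
  set pbar : Z → ℝ := fun z => (∑ i : Fin n, q i z) / n with hpbar
  have hq0 : ∀ i z, 0 ≤ q i z := by
    intro i z
    apply Finset.sum_nonneg
    intro f _
    split
    · exact hp.1 f
    · exact le_rfl
  have hq1 : ∀ i, ∑ z, q i z = 1 := by
    intro i
    have := pushF_mul_sum p (fun f => f i) (fun _ => 1)
    simpa [hp.2] using this
  have hqge : ∀ i (f : Fin n → Z), p f ≤ q i (f i) := by
    intro i f
    have : p f = (if f i = f i then p f else 0) := by simp
    rw [this]
    refine Finset.single_le_sum (f := fun g => if g i = f i then p g else 0)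
      (fun g _ => ?_) (Finset.mem_univ f)
    split
    · exact hp.1 g
    · exact le_rfl
  have hpbar0 : ∀ z, 0 ≤ pbar z := fun z =>
    div_nonneg (Finset.sum_nonneg fun i _ => hq0 i z) hnR.le
  have hpbar1 : ∑ z, pbar z = 1 := by
    rw [hpbar]
    simp only [← Finset.sum_div]
    rw [Finset.sum_comm]
    simp [hq1]
    omega
  -- key quantities
  set Si : Fin n → ℝ := fun i => ∑ z, q i z * Real.log (q i z) with hSi
  set ci : Fin n → ℝ := fun i => ∑ z, q i z * Real.log (Q₀ z) with hci
  set Sp : ℝ := ∑ f, p f * Real.log (p f) with hSp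
  have E2 : ∀ i, klDivF (q i) Q₀ = Si i - ci i := fun i =>
    klDivF_eq _ _ (fun z _ => (hQ₀pos z).ne')
  have E1 : klDivF pbar Q₀ =
      (∑ z, pbar z * Real.log (pbar z)) - ∑ z, pbar z * Real.log (Q₀ z) :=
    klDivF_eq _ _ (fun z _ => (hQ₀pos z).ne')
  have cross : ∑ z, pbar z * Real.log (Q₀ z) = (1/n) * ∑ i, ci i := by
    have : ∀ z, pbar z * Real.log (Q₀ z) = (∑ i, q i z * Real.log (Q₀ z)) / n := by
      intro z
      rw [hpbar]
      rw [div_mul_eq_mul_div, Finset.sum_mul]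
    simp_rw [this, ← Finset.sum_div]
    rw [Finset.sum_comm, hci]
    rw [Finset.sum_div]
    rw [Finset.mul_sum]
    refine Finset.sum_congr rfl fun i _ => ?_
    ring
  -- E3
  have E3 : klDivF p (fun f => ∏ i, Q₀ (f i)) = Sp - ∑ i, ci i := by
    rw [klDivF_eq _ _ (fun f _ => Finset.prod_ne_zero_iff.2 fun i _ => (hQ₀pos (f i)).ne')]
    congr 1
    have : ∀ f : Fin n → Z, p f * Real.log (∏ i, Q₀ (f i)) =
        ∑ i, p f * Real.log (Q₀ (f i)) := by
      intro f
      rw [Real.log_prod (fun i _ => (hQ₀pos (f i)).ne'), Finset.mul_sum]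
    simp_rw [this]
    rw [Finset.sum_comm]
    refine Finset.sum_congr rfl fun i _ => ?_
    rw [hci]
    exact (pushF_mul_sum p (fun f => f i) (fun z => Real.log (Q₀ z))).symm
  -- E4
  have hacP : ∀ f : Fin n → Z, p f ≠ 0 → (∏ i, q i (f i)) ≠ 0 := by
    intro f hf
    have hpf : 0 < p f := lt_of_le_of_ne (hp.1 f) (Ne.symm hf)
    exact (Finset.prod_pos fun i _ => lt_of_lt_of_le hpf (hqge i f)).ne'
  have E4 : klDivF p (fun f => ∏ i, q i (f i)) = Sp - ∑ i, Si i := by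
    rw [klDivF_eq _ _ hacP]
    congr 1
    have : ∀ f : Fin n → Z, p f * Real.log (∏ i, q i (f i)) =
        ∑ i, p f * Real.log (q i (f i)) := by
      intro f
      by_cases hf : p f = 0
      · simp [hf]
      · have : ∀ i ∈ Finset.univ, q i (f i) ≠ 0 := by
          intro i _
          have hpf : 0 < p f := lt_of_le_of_ne (hp.1 f) (Ne.symm hf)
          exact (lt_of_lt_of_le hpf (hqge i f)).ne'
        rw [Real.log_prod this, Finset.mul_sum]
    simp_rw [this]
    rw [Finset.sum_comm]
    refine Finset.sum_congr rfl fun i _ => ?_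
    rw [hSi]
    exact (pushF_mul_sum p (fun f => f i) (fun z => Real.log (q i z))).symm
  -- Gibbs applications
  have G1 : 0 ≤ klDivF pbar Q₀ :=
    gibbs _ _ hpbar0 hpbar1 (fun z => (hQ₀pos z).le) hQ₀.2.le
      (fun z hz => absurd hz (hQ₀pos z).ne')
  have hPprod1 : ∑ f : Fin n → Z, ∏ i, q i (f i) = 1 := by
    rw [← Fintype.prod_sum]
    simp [hq1]
  have G2 : 0 ≤ klDivF p (fun f => ∏ i, q i (f i)) := by
    refine gibbs _ _ hp.1 hp.2 (fun f => Finset.prod_nonneg fun i _ => hq0 i (f i))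
      hPprod1.le (fun f hf => ?_)
    by_contra hpf
    exact hacP f hpf hf
  -- conclude
  have key1 : (∑ i, Si i) - (∑ i, ci i) ≤ δ := by
    rw [E4] at G2
    rw [E3] at h
    linarith
  have key2 : (1/(n:ℝ)) * ∑ i, ci i ≤ ∑ z, pbar z * Real.log (pbar z) := by
    rw [E1, cross] at G1
    linarith
  have hent1 : entF pbar = -∑ z, pbar z * Real.log (pbar z) := rfl
  have hent2 : ∀ i, entF (q i) = -Si i := fun i => rfl
  show entF pbar - (1/n) * ∑ i, entF (q i) ≤ δ/n
  rw [hent1]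
  simp_rw [hent2]
  rw [Finset.sum_neg_distrib]
  have hmul : (1/(n:ℝ)) * ((∑ i, Si i) - (∑ i, ci i)) ≤ (1/n) * δ :=
    mul_le_mul_of_nonneg_left key1 (by positivity)
  have : δ/n = (1/(n:ℝ)) * δ := by ring
  rw [this]
  nlinarith [key2, hmul]
end

section
/- Let α, β ∈ [0,1] and let p be the product PMF on (ZMod 2)² of Bernoulli(α) and Bernoulli(β) (the law of independent (U,S₂) with P(U=1) = α and P(S₂=1) = β). Then the mutual information I(U ; U ⊕ S₂), computed from the induced joint law of (U, U ⊕ S₂), equals h(η) − h(β), where η = αβ + (1−α)(1−β). [Rate computation for the reverse degraded channel with binary additive state, Proposition 4 of the paper.] -/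
open scoped BigOperators

lemma sum_zmod2 (f : ZMod 2 → ℝ) : ∑ x, f x = f 0 + f 1 := Fin.sum_univ_two f

lemma sum_zmod2sq (f : ZMod 2 × ZMod 2 → ℝ) :
    ∑ x, f x = f (0,0) + f (0,1) + f (1,0) + f (1,1) := by
  rw [Fintype.sum_prod_type, sum_zmod2 (fun a => ∑ b, f (a,b)), sum_zmod2, sum_zmod2]; ring

lemma key (x y : ℝ) (hx : 0 ≤ x) (hy : 0 ≤ y) :
    (x*y) * Real.log (x*y) = (x*y)*Real.log x + (x*y)*Real.log y := by
  rcases eq_or_lt_of_le hx with h|h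
  · simp [← h]
  rcases eq_or_lt_of_le hy with h'|h'
  · simp [← h']
  rw [Real.log_mul h.ne' h'.ne']; ring

/-- Rate computation for the reverse degraded channel (Proposition 4): if `(U,S₂)` are
independent `Bernoulli(α)` and `Bernoulli(β)`, then
`I(U ; U ⊕ S₂) = h(η) − h(β)` where `η = αβ + (1−α)(1−β)`. -/
theorem mutInfo_xor_bernoulli (α β : ℝ) (hα : 0 ≤ α ∧ α ≤ 1) (hβ : 0 ≤ β ∧ β ≤ 1) :
    mutInfoF (pushF (fun us : ZMod 2 × ZMod 2 => bern α us.1 * bern β us.2)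
        (fun us => (us.1, us.1 + us.2)))
      = binEnt (α * β + (1 - α) * (1 - β)) - binEnt β := by
  have hq : (pushF (fun us : ZMod 2 × ZMod 2 => bern α us.1 * bern β us.2)
        (fun us => (us.1, us.1 + us.2)))
      = fun v => bern α v.1 * bern β (v.1 + v.2) := by
    funext ⟨u,x⟩
    rw [pushF]
    rw [sum_zmod2sq (f := fun a => if ((a.1, a.1+a.2) = (u,x)) then bern α a.1 * bern β a.2 else 0)]
    fin_cases u <;> fin_cases x <;>
      simp (config := {decide := true}) [bern, Prod.ext_iff, show (2:ZMod 2)=0 from by decide,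
        show (0:ZMod 2) ≠ 1 from by decide, show (1+1:ZMod 2)=0 from by decide]
  rw [hq, mutInfoF]
  simp only [entF, pushF, sum_zmod2sq, sum_zmod2, binEnt]
  simp only [bern, Prod.ext_iff, if_true, if_false,
    show (0:ZMod 2) ≠ 1 from by decide, show (0+0:ZMod 2)=0 from by decide,
    show (0+1:ZMod 2)=1 from by decide, show (1+0:ZMod 2)=1 from by decide,
    show (1+1:ZMod 2)=0 from by decide, show (1:ZMod 2) ≠ 0 from by decide]
  norm_num
  rw [show α*β+α*(1-β) = α from by ring, show (1-α)*(1-β)+(1-α)*β = 1-α from by ring,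
    show (1-α)*(1-β)+α*β = α*β+(1-α)*(1-β) from by ring,
    show (1-(α*β+(1-α)*(1-β))) = (1-α)*β+α*(1-β) from by ring,
    key α β hα.1 hβ.1, key α (1-β) hα.1 (by linarith [hβ.2]),
    key (1-α) β (by linarith [hα.2]) hβ.1, key (1-α) (1-β) (by linarith [hα.2]) (by linarith [hβ.2])]
  ring
end
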